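/- arXiv:2306.06714 — 2 statements merged into one kernel-verified Lean document; each statement's English description precedes it below -/
import Mathlib

section
/- For every n ≥ 4, the graph K_n^+ satisfies σ⊠_E(K_n^+) > max{σ×_E(K_n^+), σ□_E(K_n^+)}. -/
open SimpleGraph

/-- An `l`-track on `G`: a surjective function whose consecutive values are adjacent. -/
def IsTrack {V : Type*} (G : SimpleGraph V) {l : ℕ} (f : Fin l → V) : Prop :=
  Function.Surjective f ∧
    ∀ i : ℕ, ∀ hi : i + 1 < l, G.Adj (f ⟨i, Nat.lt_of_succ_lt hi⟩) (f ⟨i + 1, hi⟩)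

/-- A lazy `l`-track on `G`: consecutive values are adjacent or equal. -/
def IsLazyTrack {V : Type*} (G : SimpleGraph V) {l : ℕ} (f : Fin l → V) : Prop :=
  Function.Surjective f ∧
    ∀ i : ℕ, ∀ hi : i + 1 < l,
      G.Adj (f ⟨i, Nat.lt_of_succ_lt hi⟩) (f ⟨i + 1, hi⟩) ∨
        f ⟨i, Nat.lt_of_succ_lt hi⟩ = f ⟨i + 1, hi⟩

/-- The condition that every edge of `G` is traversed by `f`. -/
def SweepCond {V : Type*} (G : SimpleGraph V) {l : ℕ} (f : Fin l → V) : Prop :=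
  ∀ e ∈ G.edgeSet, ∃ i : ℕ, ∃ hi : i + 1 < l,
    e = s(f ⟨i, Nat.lt_of_succ_lt hi⟩, f ⟨i + 1, hi⟩)

/-- An `l`-sweep on `G`: an `l`-track traversing every edge. -/
def IsSweep {V : Type*} (G : SimpleGraph V) {l : ℕ} (f : Fin l → V) : Prop :=
  IsTrack G f ∧ SweepCond G f

/-- A lazy `l`-sweep on `G`: a lazy `l`-track traversing every edge. -/
def IsLazySweep {V : Type*} (G : SimpleGraph V) {l : ℕ} (f : Fin l → V) : Prop :=
  IsLazyTrack G f ∧ SweepCond G f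

/-- `f` and `g` are opposite: at each step exactly `f` moves iff `g` stays. -/
def IsOpposite {V : Type*} (G : SimpleGraph V) {l : ℕ} (f g : Fin l → V) : Prop :=
  ∀ i : ℕ, ∀ hi : i + 1 < l,
    (G.Adj (f ⟨i, Nat.lt_of_succ_lt hi⟩) (f ⟨i + 1, hi⟩) ↔
      g ⟨i, Nat.lt_of_succ_lt hi⟩ = g ⟨i + 1, hi⟩)

/-- The distance `m_G(f,g)`: minimal distance between simultaneous positions. -/
noncomputable def mDist {V : Type*} (G : SimpleGraph V) {l : ℕ} (f g : Fin l → V) : ℕ :=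
  sInf {d | ∃ i : Fin l, G.dist (f i) (g i) = d}

/-- Strong vertex span `σ⊠_V(G)`. -/
noncomputable def strongVertexSpan {V : Type*} (G : SimpleGraph V) : ℕ :=
  sSup {d | ∃ (l : ℕ) (f g : Fin l → V), IsLazyTrack G f ∧ IsLazyTrack G g ∧ mDist G f g = d}

/-- Direct vertex span `σ×_V(G)`. -/
noncomputable def directVertexSpan {V : Type*} (G : SimpleGraph V) : ℕ :=
  sSup {d | ∃ (l : ℕ) (f g : Fin l → V), IsTrack G f ∧ IsTrack G g ∧ mDist G f g = d}

/-- Cartesian vertex span `σ□_V(G)`. -/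
noncomputable def cartesianVertexSpan {V : Type*} (G : SimpleGraph V) : ℕ :=
  sSup {d | ∃ (l : ℕ) (f g : Fin l → V),
    IsLazyTrack G f ∧ IsLazyTrack G g ∧ IsOpposite G f g ∧ mDist G f g = d}

/-- Strong edge span `σ⊠_E(G)`. -/
noncomputable def strongEdgeSpan {V : Type*} (G : SimpleGraph V) : ℕ :=
  sSup {d | ∃ (l : ℕ) (f g : Fin l → V), IsLazySweep G f ∧ IsLazySweep G g ∧ mDist G f g = d}

/-- Direct edge span `σ×_E(G)`. -/
noncomputable def directEdgeSpan {V : Type*} (G : SimpleGraph V) : ℕ :=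
  sSup {d | ∃ (l : ℕ) (f g : Fin l → V), IsSweep G f ∧ IsSweep G g ∧ mDist G f g = d}

/-- Cartesian edge span `σ□_E(G)`. -/
noncomputable def cartesianEdgeSpan {V : Type*} (G : SimpleGraph V) : ℕ :=
  sSup {d | ∃ (l : ℕ) (f g : Fin l → V),
    IsLazySweep G f ∧ IsLazySweep G g ∧ IsOpposite G f g ∧ mDist G f g = d}

/-- `L⊠_V(G)`: minimal length of lazy tracks realizing the strong vertex span. -/
noncomputable def strongVertexL {V : Type*} (G : SimpleGraph V) : ℕ :=
  sInf {l | ∃ f g : Fin l → V,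
    IsLazyTrack G f ∧ IsLazyTrack G g ∧ mDist G f g = strongVertexSpan G}

/-- `L×_V(G)`. -/
noncomputable def directVertexL {V : Type*} (G : SimpleGraph V) : ℕ :=
  sInf {l | ∃ f g : Fin l → V,
    IsTrack G f ∧ IsTrack G g ∧ mDist G f g = directVertexSpan G}

/-- `L□_V(G)`. -/
noncomputable def cartesianVertexL {V : Type*} (G : SimpleGraph V) : ℕ :=
  sInf {l | ∃ f g : Fin l → V,
    IsLazyTrack G f ∧ IsLazyTrack G g ∧ IsOpposite G f g ∧ mDist G f g = cartesianVertexSpan G}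

/-- `L⊠_E(G)`. -/
noncomputable def strongEdgeL {V : Type*} (G : SimpleGraph V) : ℕ :=
  sInf {l | ∃ f g : Fin l → V,
    IsLazySweep G f ∧ IsLazySweep G g ∧ mDist G f g = strongEdgeSpan G}

/-- `L×_E(G)`. -/
noncomputable def directEdgeL {V : Type*} (G : SimpleGraph V) : ℕ :=
  sInf {l | ∃ f g : Fin l → V,
    IsSweep G f ∧ IsSweep G g ∧ mDist G f g = directEdgeSpan G}

/-- `L□_E(G)`. -/
noncomputable def cartesianEdgeL {V : Type*} (G : SimpleGraph V) : ℕ :=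
  sInf {l | ∃ f g : Fin l → V,
    IsLazySweep G f ∧ IsLazySweep G g ∧ IsOpposite G f g ∧ mDist G f g = cartesianEdgeSpan G}

/-- `K_n^+`: the complete graph `K_n` (on `Fin n`, with `v_1 = 0` and `v_n = n-1`)
with the edge `v_1 v_n` subdivided through the new vertex `w = Sum.inr ()`. -/
def KnPlus (n : ℕ) : SimpleGraph (Fin n ⊕ Unit) :=
  SimpleGraph.fromRel (fun a b =>
    match a, b with
    | Sum.inl i, Sum.inl j =>
        ¬((i.val = 0 ∧ j.val = n - 1) ∨ (i.val = n - 1 ∧ j.val = 0))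
    | Sum.inl i, Sum.inr _ => i.val = 0 ∨ i.val = n - 1
    | Sum.inr _, _ => False)

section KP
variable {n : ℕ} [NeZero n]
open Fin.NatCast

abbrev VV (n : ℕ) := Fin n ⊕ Unit
def va : VV n := Sum.inl ((0 : ℕ) : Fin n)
def vb : VV n := Sum.inl ((n-1 : ℕ) : Fin n)
def vw : VV n := Sum.inr ()
def mid (k : ℕ) : VV n := Sum.inl ((k : ℕ) : Fin n)

lemma knadj_inl_inl {i j : Fin n} :
    (KnPlus n).Adj (Sum.inl i) (Sum.inl j) ↔
      i ≠ j ∧ ¬((i.val = 0 ∧ j.val = n - 1) ∨ (i.val = n - 1 ∧ j.val = 0)) := by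
  rw [KnPlus, fromRel_adj]
  constructor
  · rintro ⟨h1, h2 | h2⟩
    · exact ⟨fun h => h1 (by rw [h]), h2⟩
    · refine ⟨fun h => h1 (by rw [h]), fun h => h2 ?_⟩
      tauto
  · rintro ⟨h1, h2⟩
    exact ⟨fun h => h1 (by injection h), Or.inl h2⟩

lemma knadj_inl_inr {i : Fin n} {u : Unit} :
    (KnPlus n).Adj (Sum.inl i) (Sum.inr u) ↔ (i.val = 0 ∨ i.val = n - 1) := by
  rw [KnPlus, fromRel_adj]
  constructor
  · rintro ⟨h1, h2 | h2⟩
    · exact h2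
    · exact h2.elim
  · intro h; exact ⟨by simp, Or.inl h⟩


lemma va_def (hn : 4 ≤ n) : (va : VV n) = Sum.inl ⟨0, by omega⟩ := by
  unfold va; congr 1

lemma vb_def (hn : 4 ≤ n) : (vb : VV n) = Sum.inl ⟨n-1, by omega⟩ := by
  unfold vb; congr 1; apply Fin.ext; rw [Fin.val_cast_of_lt (by omega)]

lemma mid_def (hn : 4 ≤ n) {k : ℕ} (hk : k < n) : (mid k : VV n) = Sum.inl ⟨k, hk⟩ := by
  unfold mid; congr 1; apply Fin.ext; rw [Fin.val_cast_of_lt (by omega)]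

lemma adj_va_vw (hn : 4 ≤ n) : (KnPlus n).Adj va vw := by
  rw [va_def hn, vw, knadj_inl_inr]; left; rfl

lemma adj_vb_vw (hn : 4 ≤ n) : (KnPlus n).Adj vb vw := by
  rw [vb_def hn, vw, knadj_inl_inr]; right; rfl

lemma adj_va_mid (hn : 4 ≤ n) {k : ℕ} (h1 : 1 ≤ k) (h2 : k ≤ n - 2) :
    (KnPlus n).Adj va (mid k) := by
  rw [va_def hn, mid_def hn (by omega), knadj_inl_inl]
  refine ⟨by simp [Fin.ext_iff]; omega, by simp; omega⟩

lemma adj_vb_mid (hn : 4 ≤ n) {k : ℕ} (h1 : 1 ≤ k) (h2 : k ≤ n - 2) :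
    (KnPlus n).Adj vb (mid k) := by
  rw [vb_def hn, mid_def hn (by omega), knadj_inl_inl]
  refine ⟨by simp [Fin.ext_iff]; omega, by simp; omega⟩

lemma adj_mid_mid (hn : 4 ≤ n) {i j : ℕ} (h1 : 1 ≤ i) (h2 : i ≤ n - 2)
    (h3 : 1 ≤ j) (h4 : j ≤ n - 2) (hij : i ≠ j) :
    (KnPlus n).Adj (mid i) (mid j) := by
  rw [mid_def hn (by omega), mid_def hn (by omega), knadj_inl_inl]
  refine ⟨by simp [Fin.ext_iff]; omega, by simp; omega⟩

lemma not_adj_va_vb (hn : 4 ≤ n) : ¬ (KnPlus n).Adj va vb := by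
  rw [va_def hn, vb_def hn, knadj_inl_inl]
  rintro ⟨h1, h2⟩; exact h2 (Or.inl ⟨rfl, rfl⟩)

lemma not_adj_vw_mid (hn : 4 ≤ n) {k : ℕ} (h1 : 1 ≤ k) (h2 : k ≤ n - 2) :
    ¬ (KnPlus n).Adj vw (mid k) := by
  rw [mid_def hn (by omega), vw]
  intro h
  have := ((KnPlus n).adj_symm h)
  rw [knadj_inl_inr] at this
  simp at this; omega

end KP

section KP2
variable {n : ℕ} [NeZero n]

lemma dist_eq_two_of {V : Type*} {G : SimpleGraph V} {x y z : V}
    (hne : x ≠ y) (hna : ¬ G.Adj x y) (h1 : G.Adj x z) (h2 : G.Adj z y) :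
    G.dist x y = 2 := by
  have hw : G.Walk x y := SimpleGraph.Walk.cons h1 (SimpleGraph.Walk.cons h2 SimpleGraph.Walk.nil)
  have hle : G.dist x y ≤ 2 := by
    simpa using SimpleGraph.dist_le
      (SimpleGraph.Walk.cons h1 (SimpleGraph.Walk.cons h2 SimpleGraph.Walk.nil))
  have hr : G.Reachable x y := ⟨hw⟩
  have h0 : G.dist x y ≠ 0 := by
    intro h
    rcases SimpleGraph.dist_eq_zero_iff_eq_or_not_reachable.1 h with h' | h'
    · exact hne h'
    · exact h' hr
  have h1' : G.dist x y ≠ 1 := by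
    intro h
    obtain ⟨p, hp⟩ := hr.exists_walk_length_eq_dist
    rw [h] at hp
    exact hna (SimpleGraph.Walk.adj_of_length_eq_one hp)
  omega

lemma dist_le_two_of {V : Type*} {G : SimpleGraph V} {x y z : V}
    (h1 : G.Adj x z) (h2 : G.Adj z y) : G.dist x y ≤ 2 := by
  simpa using SimpleGraph.dist_le
    (SimpleGraph.Walk.cons h1 (SimpleGraph.Walk.cons h2 SimpleGraph.Walk.nil))

lemma ne_va_vb (hn : 4 ≤ n) : (va : VV n) ≠ vb := by
  rw [va_def hn, vb_def hn]
  intro h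
  have := Sum.inl.inj h
  rw [Fin.mk.injEq] at this
  omega

lemma ne_vw_mid (hn : 4 ≤ n) {k : ℕ} (hkn : k < n) : (vw : VV n) ≠ mid k := by
  rw [vw, mid_def hn hkn]; simp

lemma ne_mid_va (hn : 4 ≤ n) {k : ℕ} (h1 : 1 ≤ k) (hkn : k < n) : (mid k : VV n) ≠ va := by
  rw [va_def hn, mid_def hn hkn]
  intro h
  have := Sum.inl.inj h
  rw [Fin.mk.injEq] at this
  omega

lemma ne_mid_vb (hn : 4 ≤ n) {k : ℕ} (h2 : k ≤ n - 2) (hkn : k < n) : (mid k : VV n) ≠ vb := by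
  rw [vb_def hn, mid_def hn hkn]
  intro h
  have := Sum.inl.inj h
  rw [Fin.mk.injEq] at this
  omega

lemma dist_va_vb (hn : 4 ≤ n) : (KnPlus n).dist va (vb : VV n) = 2 :=
  dist_eq_two_of (ne_va_vb hn) (not_adj_va_vb hn) (adj_va_vw hn) ((KnPlus n).adj_symm (adj_vb_vw hn))

lemma dist_vw_mid (hn : 4 ≤ n) {k : ℕ} (h1 : 1 ≤ k) (h2 : k ≤ n - 2) :
    (KnPlus n).dist (vw : VV n) (mid k) = 2 :=
  dist_eq_two_of (ne_vw_mid hn (by omega)) (not_adj_vw_mid hn h1 h2)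
    ((KnPlus n).adj_symm (adj_va_vw hn)) (adj_va_mid hn h1 h2)

lemma vertex_cases (hn : 4 ≤ n) (x : VV n) :
    x = va ∨ x = vb ∨ x = vw ∨ ∃ k, 1 ≤ k ∧ k ≤ n - 2 ∧ x = mid k := by
  rcases x with i | u
  · rcases Nat.lt_or_ge i.val 1 with h | h
    · left; rw [va_def hn]; congr 1; exact Fin.ext (show i.val = 0 by omega)
    · rcases Nat.lt_or_ge i.val (n-1) with h' | h'
      · right; right; right
        refine ⟨i.val, h, by omega, by rw [mid_def hn i.2]⟩
      · right; left; rw [vb_def hn]; congr 1; exact Fin.ext (show i.val = n - 1 by have := i.2; omega)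
  · right; right; left; rfl

lemma dist_le_two (hn : 4 ≤ n) (x y : VV n) : (KnPlus n).dist x y ≤ 2 := by
  by_cases hxy : x = y
  · subst hxy; rw [SimpleGraph.dist_self]; omega
  by_cases hadj : (KnPlus n).Adj x y
  · have := SimpleGraph.dist_le hadj.toWalk
    simp only [SimpleGraph.Adj.toWalk, SimpleGraph.Walk.length_cons,
      SimpleGraph.Walk.length_nil] at this
    omega
  have key : ∃ z, (KnPlus n).Adj x z ∧ (KnPlus n).Adj z y := by
    rcases vertex_cases hn x with hx | hx | hx | ⟨k, hk1, hk2, hx⟩ <;>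
      rcases vertex_cases hn y with hy | hy | hy | ⟨j, hj1, hj2, hy⟩ <;> subst hx hy
    all_goals first
      | (exact absurd rfl hxy)
      | (exact ⟨vw, adj_va_vw hn, (KnPlus n).adj_symm (adj_vb_vw hn)⟩)
      | (exact ⟨vw, adj_vb_vw hn, (KnPlus n).adj_symm (adj_va_vw hn)⟩)
      | (exact absurd (adj_va_vw hn) hadj)
      | (exact absurd ((KnPlus n).adj_symm (adj_va_vw hn)) hadj)
      | (exact absurd (adj_vb_vw hn) hadj)
      | (exact absurd ((KnPlus n).adj_symm (adj_vb_vw hn)) hadj)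
      | (exact absurd (adj_va_mid hn hj1 hj2) hadj)
      | (exact absurd ((KnPlus n).adj_symm (adj_va_mid hn hk1 hk2)) hadj)
      | (exact absurd (adj_vb_mid hn hj1 hj2) hadj)
      | (exact absurd ((KnPlus n).adj_symm (adj_vb_mid hn hk1 hk2)) hadj)
      | (exact ⟨va, (KnPlus n).adj_symm (adj_va_vw hn), adj_va_mid hn hj1 hj2⟩)
      | (exact ⟨va, (KnPlus n).adj_symm (adj_va_mid hn hk1 hk2), adj_va_vw hn⟩)
      | (refine absurd (adj_mid_mid hn hk1 hk2 hj1 hj2 ?_) hadj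
         intro h; subst h; exact hxy rfl)
  obtain ⟨z, h1, h2⟩ := key
  exact dist_le_two_of h1 h2

end KP2

section Witness
variable (n : ℕ) [NeZero n]

/-- step relation for pairs of lazy walks -/
def PRel : (VV n × VV n) → (VV n × VV n) → Prop :=
  fun p q => ((KnPlus n).Adj p.1 q.1 ∨ p.1 = q.1) ∧ ((KnPlus n).Adj p.2 q.2 ∨ p.2 = q.2)

def la : ℕ → List (VV n × VV n)
  | 0 => []
  | k+1 => (va, vb) :: (mid (k+1), vw) :: la k

def lc : ℕ → List (VV n × VV n)
  | 0 => []
  | k+1 => (vb, va) :: (mid (k+1), vw) :: lc k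

def drow (j : ℕ) : ℕ → List (VV n × VV n)
  | 0 => []
  | i+1 => (mid (i+1), vw) :: (mid j, vw) :: drow j i

def dall : ℕ → List (VV n × VV n)
  | 0 => []
  | j+1 => drow n (j+1) j ++ dall j

/-- the core of the first half -/
def core : List (VV n × VV n) :=
  la n (n-2) ++ ((va, vb) :: (vw, mid 1) :: lc n (n-2)) ++ ((vb, va) :: dall n (n-2))

def Shalf : List (VV n × VV n) := core n ++ [(vb, va)]

def LL : List (VV n × VV n) := Shalf n ++ (Shalf n).map Prod.swap

variable {n}

lemma mem_la {k : ℕ} {p : VV n × VV n} (h : p ∈ la n k) :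
    p = (va, vb) ∨ ∃ j, 1 ≤ j ∧ j ≤ k ∧ p = (mid j, vw) := by
  induction k with
  | zero => simp [la] at h
  | succ k ih =>
    rw [la, List.mem_cons, List.mem_cons] at h
    rcases h with h | h | h
    · exact Or.inl h
    · exact Or.inr ⟨k+1, by omega, by omega, h⟩
    · rcases ih h with h' | ⟨j, hj1, hj2, h'⟩
      · exact Or.inl h'
      · exact Or.inr ⟨j, hj1, by omega, h'⟩

lemma mem_lc {k : ℕ} {p : VV n × VV n} (h : p ∈ lc n k) :
    p = (vb, va) ∨ ∃ j, 1 ≤ j ∧ j ≤ k ∧ p = (mid j, vw) := by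
  induction k with
  | zero => simp [lc] at h
  | succ k ih =>
    rw [lc, List.mem_cons, List.mem_cons] at h
    rcases h with h | h | h
    · exact Or.inl h
    · exact Or.inr ⟨k+1, by omega, by omega, h⟩
    · rcases ih h with h' | ⟨j, hj1, hj2, h'⟩
      · exact Or.inl h'
      · exact Or.inr ⟨j, hj1, by omega, h'⟩

lemma mem_drow {j k : ℕ} (hk : k < j) {p : VV n × VV n} (h : p ∈ drow n j k) :
    ∃ i, 1 ≤ i ∧ i ≤ j ∧ p = (mid i, vw) := by
  induction k with
  | zero => simp [drow] at h
  | succ k ih =>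
    rw [drow, List.mem_cons, List.mem_cons] at h
    rcases h with h | h | h
    · exact ⟨k+1, by omega, by omega, h⟩
    · exact ⟨j, by omega, by omega, h⟩
    · exact ih (by omega) h

lemma mem_dall {k : ℕ} {p : VV n × VV n} (h : p ∈ dall n k) :
    ∃ i, 1 ≤ i ∧ i ≤ k ∧ p = (mid i, vw) := by
  induction k with
  | zero => simp [dall] at h
  | succ k ih =>
    rw [dall, List.mem_append] at h
    rcases h with h | h
    · obtain ⟨i, h1, h2, h3⟩ := mem_drow (by omega) h
      exact ⟨i, h1, by omega, h3⟩
    · obtain ⟨i, h1, h2, h3⟩ := ih h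
      exact ⟨i, h1, by omega, h3⟩

lemma mem_core {p : VV n × VV n} (h : p ∈ core n) :
    p = (va, vb) ∨ p = (vb, va) ∨ p = (vw, mid 1) ∨
      ∃ j, 1 ≤ j ∧ j ≤ n - 2 ∧ p = (mid j, vw) := by
  rw [core] at h
  simp only [List.mem_append, List.mem_cons] at h
  rcases h with (h | (h | h | h)) | (h | h)
  · rcases mem_la h with h' | ⟨j, h1, h2, h3⟩
    · exact Or.inl h'
    · exact Or.inr (Or.inr (Or.inr ⟨j, h1, h2, h3⟩))
  · exact Or.inl h
  · exact Or.inr (Or.inr (Or.inl h))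
  · rcases mem_lc h with h' | ⟨j, h1, h2, h3⟩
    · exact Or.inr (Or.inl h')
    · exact Or.inr (Or.inr (Or.inr ⟨j, h1, h2, h3⟩))
  · exact Or.inr (Or.inl h)
  · obtain ⟨j, h1, h2, h3⟩ := mem_dall h
    exact Or.inr (Or.inr (Or.inr ⟨j, h1, h2, h3⟩))

lemma mem_LL {p : VV n × VV n} (h : p ∈ LL n) :
    (p ∈ core n ∨ p = (vb, va)) ∨ ∃ q, (q ∈ core n ∨ q = (vb, va)) ∧ p = Prod.swap q := by
  rw [LL, List.mem_append, Shalf] at h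
  rcases h with h | h
  · rw [List.mem_append] at h
    rcases h with h | h
    · exact Or.inl (Or.inl h)
    · simp at h; exact Or.inl (Or.inr h)
  · rw [List.mem_map] at h
    obtain ⟨q, hq, rfl⟩ := h
    rw [List.mem_append] at hq
    rcases hq with hq | hq
    · exact Or.inr ⟨q, Or.inl hq, rfl⟩
    · simp at hq; exact Or.inr ⟨q, Or.inr hq, rfl⟩

end Witness

section Chains
variable {n : ℕ} [NeZero n]

lemma last_cons' {α : Type*} {l : List α} {a : α} (h : l ≠ []) :
    (a :: l).getLast? = l.getLast? := by
  cases l with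
  | nil => exact absurd rfl h
  | cons b t => rw [List.getLast?_cons_cons]

lemma chain'_all {α : Type*} {R : α → α → Prop} {l : List α}
    (h : ∀ x ∈ l, ∀ y ∈ l, R x y) : List.IsChain R l := by
  induction l with
  | nil => exact List.isChain_nil
  | cons a t ih =>
    rw [List.isChain_cons]
    refine ⟨fun y hy => h a (by simp) y (by
      simp only [List.mem_cons]; exact Or.inr (List.mem_of_mem_head? hy)), ?_⟩
    exact ih fun x hx y hy => h x (by simp [hx]) y (by simp [hy])

-- Basic PRel facts
lemma prel_refl (p : VV n × VV n) : PRel n p p := ⟨Or.inr rfl, Or.inr rfl⟩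

lemma prel_swap {p q : VV n × VV n} (h : PRel n p q) : PRel n p.swap q.swap := ⟨h.2, h.1⟩

lemma prel_ab_mid (hn : 4 ≤ n) {j : ℕ} (h1 : 1 ≤ j) (h2 : j ≤ n-2) :
    PRel n (va, vb) (mid j, vw) :=
  ⟨Or.inl (adj_va_mid hn h1 h2), Or.inl (adj_vb_vw hn)⟩

lemma prel_mid_ab (hn : 4 ≤ n) {j : ℕ} (h1 : 1 ≤ j) (h2 : j ≤ n-2) :
    PRel n (mid j, vw) (va, vb) :=
  ⟨Or.inl ((KnPlus n).adj_symm (adj_va_mid hn h1 h2)), Or.inl ((KnPlus n).adj_symm (adj_vb_vw hn))⟩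

lemma prel_ba_mid (hn : 4 ≤ n) {j : ℕ} (h1 : 1 ≤ j) (h2 : j ≤ n-2) :
    PRel n (vb, va) (mid j, vw) :=
  ⟨Or.inl (adj_vb_mid hn h1 h2), Or.inl (adj_va_vw hn)⟩

lemma prel_mid_ba (hn : 4 ≤ n) {j : ℕ} (h1 : 1 ≤ j) (h2 : j ≤ n-2) :
    PRel n (mid j, vw) (vb, va) :=
  ⟨Or.inl ((KnPlus n).adj_symm (adj_vb_mid hn h1 h2)), Or.inl ((KnPlus n).adj_symm (adj_va_vw hn))⟩

lemma prel_mid_mid (hn : 4 ≤ n) {i j : ℕ} (h1 : 1 ≤ i) (h2 : i ≤ n-2)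
    (h3 : 1 ≤ j) (h4 : j ≤ n-2) : PRel n (mid i, vw) (mid j, vw) := by
  by_cases hij : i = j
  · subst hij; exact prel_refl _
  · exact ⟨Or.inl (adj_mid_mid hn h1 h2 h3 h4 hij), Or.inr rfl⟩

lemma chain_la (hn : 4 ≤ n) {k : ℕ} (hk : k ≤ n - 2) : List.IsChain (PRel n) (la n k) := by
  induction k with
  | zero => exact List.isChain_nil
  | succ k ih =>
    rw [la, List.isChain_cons_cons, List.isChain_cons]
    refine ⟨prel_ab_mid hn (by omega) hk, fun y hy => ?_, ih (by omega)⟩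
    rcases mem_la (List.mem_of_mem_head? hy) with rfl | ⟨j, hj1, hj2, rfl⟩
    · exact prel_mid_ab hn (by omega) hk
    · exact prel_mid_mid hn (by omega) hk hj1 (by omega)

lemma chain_lc (hn : 4 ≤ n) {k : ℕ} (hk : k ≤ n - 2) : List.IsChain (PRel n) (lc n k) := by
  induction k with
  | zero => exact List.isChain_nil
  | succ k ih =>
    rw [lc, List.isChain_cons_cons, List.isChain_cons]
    refine ⟨prel_ba_mid hn (by omega) hk, fun y hy => ?_, ih (by omega)⟩
    rcases mem_lc (List.mem_of_mem_head? hy) with rfl | ⟨j, hj1, hj2, rfl⟩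
    · exact prel_mid_ba hn (by omega) hk
    · exact prel_mid_mid hn (by omega) hk hj1 (by omega)

lemma chain_dall (hn : 4 ≤ n) {k : ℕ} (hk : k ≤ n - 2) : List.IsChain (PRel n) (dall n k) := by
  apply chain'_all
  intro x hx y hy
  obtain ⟨i, hi1, hi2, rfl⟩ := mem_dall hx
  obtain ⟨j, hj1, hj2, rfl⟩ := mem_dall hy
  exact prel_mid_mid hn hi1 (by omega) hj1 (by omega)

lemma la_ne_nil {k : ℕ} (h : 1 ≤ k) : la n k ≠ [] := by
  cases k with
  | zero => omega
  | succ k => rw [la]; simp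

lemma lc_ne_nil {k : ℕ} (h : 1 ≤ k) : lc n k ≠ [] := by
  cases k with
  | zero => omega
  | succ k => rw [lc]; simp

lemma head_la {k : ℕ} (h : 1 ≤ k) : (la n k).head? = some (va, vb) := by
  cases k with
  | zero => omega
  | succ k => rw [la]; rfl

lemma head_lc {k : ℕ} (h : 1 ≤ k) : (lc n k).head? = some (vb, va) := by
  cases k with
  | zero => omega
  | succ k => rw [lc]; rfl

lemma last_lc {k : ℕ} (h : 1 ≤ k) : (lc n k).getLast? = some (mid 1, vw) := by
  induction k with
  | zero => omega
  | succ k ih =>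
    rcases Nat.eq_zero_or_pos k with rfl | hk
    · rfl
    · rw [lc, last_cons' (List.cons_ne_nil _ _), last_cons' (lc_ne_nil hk)]
      exact ih hk

lemma dall_ne_nil {k : ℕ} (h : 2 ≤ k) : dall n k ≠ [] := by
  cases k with
  | zero => omega
  | succ k =>
    rw [dall]
    cases k with
    | zero => omega
    | succ k => rw [drow]; simp

lemma last_dall {k : ℕ} (h : 2 ≤ k) : (dall n k).getLast? = some (mid 2, vw) := by
  induction k with
  | zero => omega
  | succ k ih =>
    rcases Nat.lt_or_ge k 2 with hk | hk
    · have hk1 : k = 1 := by omega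
      subst hk1
      rfl
    · rw [dall, List.getLast?_append, ih hk]
      rfl

end Chains

section BigChain
variable {n : ℕ} [NeZero n]

lemma opt_eq {α : Type*} {a b : α} (h : a ∈ (some b : Option α)) : a = b := by simpa using h.symm

lemma mem_of_last {α : Type*} {l : List α} {a : α} (h : a ∈ l.getLast?) : a ∈ l := by
  obtain ⟨h', rfl⟩ := List.mem_getLast?_eq_getLast h
  exact List.getLast_mem h'

lemma last_laB (hn : 4 ≤ n) :
    ((la n (n-2) ++ ((va, vb) :: (vw, mid 1) :: lc n (n-2))).getLast?) = some (mid 1, vw) := by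
  rw [List.getLast?_append, last_cons' (List.cons_ne_nil _ _), last_cons' (lc_ne_nil (show (1:ℕ) ≤ n-2 by omega)),
    last_lc (show (1:ℕ) ≤ n - 2 by omega)]
  rfl

lemma chain_core (hn : 4 ≤ n) : List.IsChain (PRel n) (core n) := by
  rw [core, List.isChain_append, List.isChain_append]
  refine ⟨⟨chain_la hn le_rfl, ?_, ?_⟩, ?_, ?_⟩
  · -- chain of B
    rw [List.isChain_cons_cons, List.isChain_cons]
    refine ⟨⟨Or.inl (adj_va_vw hn), Or.inl (adj_vb_mid hn le_rfl (by omega))⟩,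
      fun y hy => ?_, chain_lc hn le_rfl⟩
    rw [head_lc (show (1:ℕ) ≤ n - 2 by omega)] at hy
    obtain rfl := opt_eq hy
    exact ⟨Or.inl ((KnPlus n).adj_symm (adj_vb_vw hn)),
      Or.inl ((KnPlus n).adj_symm (adj_va_mid hn le_rfl (by omega)))⟩
  · -- junction la → B
    intro x hx y hy
    rw [List.head?_cons] at hy
    obtain rfl := opt_eq hy
    rcases mem_la (mem_of_last hx) with rfl | ⟨j, hj1, hj2, rfl⟩
    · exact prel_refl _
    · exact prel_mid_ab hn hj1 hj2
  · -- chain of C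
    rw [List.isChain_cons]
    refine ⟨fun y hy => ?_, chain_dall hn le_rfl⟩
    obtain ⟨j, hj1, hj2, rfl⟩ := mem_dall (List.mem_of_mem_head? hy)
    exact prel_ba_mid hn hj1 hj2
  · -- junction (la ++ B) → C
    intro x hx y hy
    rw [List.head?_cons] at hy
    obtain rfl := opt_eq hy
    rw [last_laB hn] at hx
    obtain rfl := opt_eq hx
    exact prel_mid_ba hn le_rfl (by omega)

lemma last_core (hn : 4 ≤ n) : (core n).getLast? = some (mid 2, vw) := by
  rw [core, List.getLast?_append, last_cons' (dall_ne_nil (by omega)),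
    last_dall (by omega : 2 ≤ n - 2)]
  rfl

lemma head_core (hn : 4 ≤ n) : (core n).head? = some (va, vb) := by
  rw [core, List.head?_append, List.head?_append, head_la (by omega : 1 ≤ n - 2)]
  rfl

lemma chain_Shalf (hn : 4 ≤ n) : List.IsChain (PRel n) (Shalf n) := by
  rw [Shalf, List.isChain_append]
  refine ⟨chain_core hn, List.isChain_singleton _, ?_⟩
  intro x hx y hy
  rw [last_core hn] at hx
  obtain rfl := opt_eq hx
  rw [List.head?_cons] at hy
  obtain rfl := opt_eq hy
  exact prel_mid_ba hn (by omega) (by omega)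

lemma head_Shalf (hn : 4 ≤ n) : (Shalf n).head? = some (va, vb) := by
  rw [Shalf, List.head?_append, head_core hn]
  rfl

lemma last_Shalf (hn : 4 ≤ n) : (Shalf n).getLast? = some (vb, va) := by
  rw [Shalf, List.getLast?_append]
  rfl

lemma chain_LL (hn : 4 ≤ n) : List.IsChain (PRel n) (LL n) := by
  rw [LL, List.isChain_append]
  refine ⟨chain_Shalf hn, ?_, ?_⟩
  · rw [List.isChain_map]
    exact (chain_Shalf hn).imp (fun a b h => prel_swap h)
  · intro x hx y hy
    rw [last_Shalf hn] at hx
    obtain rfl := opt_eq hx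
    rw [List.head?_map, head_Shalf hn] at hy
    obtain rfl := opt_eq hy
    exact prel_refl _

end BigChain

section Infixes
variable {n : ℕ} [NeZero n]

lemma infix_append_left' {α : Type*} {l l₂ : List α} (l₁ : List α) (h : l <:+: l₂) :
    l <:+: l₁ ++ l₂ := by
  obtain ⟨s, t, rfl⟩ := h
  exact ⟨l₁ ++ s, t, by simp [List.append_assoc]⟩

lemma infix_append_right' {α : Type*} {l l₁ : List α} (l₂ : List α) (h : l <:+: l₁) :
    l <:+: l₁ ++ l₂ := by
  obtain ⟨s, t, rfl⟩ := h
  exact ⟨s, t ++ l₂, by simp [List.append_assoc]⟩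

lemma infix_la {k K : ℕ} (h1 : 1 ≤ k) (h2 : k ≤ K) :
    [(va, vb), ((mid k : VV n), vw)] <:+: la n K := by
  induction K with
  | zero => omega
  | succ K ih =>
    rcases Nat.lt_or_ge k (K+1) with h | h
    · rw [la]
      exact List.infix_cons (List.infix_cons (ih (by omega)))
    · have : k = K + 1 := by omega
      subst this
      exact ⟨[], la n K, rfl⟩

lemma infix_lc {k K : ℕ} (h1 : 1 ≤ k) (h2 : k ≤ K) :
    [(vb, va), ((mid k : VV n), vw)] <:+: lc n K := by
  induction K with
  | zero => omega
  | succ K ih =>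
    rcases Nat.lt_or_ge k (K+1) with h | h
    · rw [lc]
      exact List.infix_cons (List.infix_cons (ih (by omega)))
    · have : k = K + 1 := by omega
      subst this
      exact ⟨[], lc n K, rfl⟩

lemma infix_drow {j k i : ℕ} (h1 : 1 ≤ k) (h2 : k ≤ i) :
    [((mid k : VV n), vw), (mid j, vw)] <:+: drow n j i := by
  induction i with
  | zero => omega
  | succ i ih =>
    rcases Nat.lt_or_ge k (i+1) with h | h
    · rw [drow]
      exact List.infix_cons (List.infix_cons (ih (by omega)))
    · have : k = i + 1 := by omega
      subst this
      exact ⟨[], drow n j i, rfl⟩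

lemma infix_dall {j K : ℕ} (h1 : 2 ≤ j) (h2 : j ≤ K) :
    drow n j (j-1) <:+: dall n K := by
  induction K with
  | zero => omega
  | succ K ih =>
    rcases Nat.lt_or_ge j (K+1) with h | h
    · rw [dall]
      exact infix_append_left' _ (ih (by omega))
    · have hj : j = K + 1 := by omega
      subst hj
      rw [dall]
      have hK : K + 1 - 1 = K := by omega
      rw [hK]
      exact infix_append_right' _ (List.infix_refl _)

end Infixes

section Cover
variable {n : ℕ} [NeZero n]

lemma core_eq : core n = (la n (n-2) ++ ((va, vb) :: (vw, mid 1) :: lc n (n-2)))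
    ++ ((vb, va) :: dall n (n-2)) := rfl

lemma infix_core_of_la {p q : VV n × VV n}
    (h : [p, q] <:+: la n (n-2)) : [p, q] <:+: core n := by
  rw [core_eq]
  exact infix_append_right' _ (infix_append_right' _ h)

lemma infix_core_of_lc {p q : VV n × VV n}
    (h : [p, q] <:+: lc n (n-2)) : [p, q] <:+: core n := by
  rw [core_eq]
  apply infix_append_right'
  apply infix_append_left'
  obtain ⟨s, t, he⟩ := h
  exact ⟨(va, vb) :: (vw, mid 1) :: s, t, by rw [← he]; simp⟩

lemma infix_core_of_dall {p q : VV n × VV n}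
    (h : [p, q] <:+: dall n (n-2)) : [p, q] <:+: core n := by
  rw [core_eq]
  apply infix_append_left'
  obtain ⟨s, t, he⟩ := h
  exact ⟨(vb, va) :: s, t, by rw [← he]; simp⟩

lemma infix_core_avw : [((va : VV n), vb), (vw, mid 1)] <:+: core n := by
  rw [core_eq]
  apply infix_append_right'
  apply infix_append_left'
  exact ⟨[], lc n (n-2), rfl⟩

lemma infix_core_wb (hn : 4 ≤ n) : [((vw : VV n), mid 1), (vb, va)] <:+: core n := by
  rw [core_eq]
  obtain ⟨m0, hm0⟩ : ∃ m0, n - 2 = m0 + 1 := ⟨n - 3, by omega⟩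
  apply infix_append_right'
  apply infix_append_left'
  rw [hm0, lc]
  exact ⟨[(va, vb)], (mid (m0+1), vw) :: lc n m0, rfl⟩

lemma infix_Shalf_of_core {p q : VV n × VV n} (h : [p, q] <:+: core n) :
    [p, q] <:+: Shalf n := by
  rw [Shalf]
  exact infix_append_right' _ h

/-- consecutive occurrence from an infix of a 2-element list -/
lemma infix_get {α : Type*} {p q : α} {L : List α} (h : [p, q] <:+: L) :
    ∃ i : ℕ, ∃ hi : i + 1 < L.length,
      L.get ⟨i, Nat.lt_of_succ_lt hi⟩ = p ∧ L.get ⟨i+1, hi⟩ = q := by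
  obtain ⟨s, t, rfl⟩ := h
  rw [List.append_assoc]
  refine ⟨s.length, by simp, ?_, ?_⟩
  · rw [List.get_eq_getElem, List.getElem_append_right (le_refl _)]
    simp
  · rw [List.get_eq_getElem,
      List.getElem_append_right (show s.length ≤ s.length + 1 by omega)]
    have h1 : s.length + 1 - s.length = 1 := by omega
    simp [h1]

/-- an occurrence in `Shalf` yields occurrences in `LL` for both coordinates -/
lemma cover_f {p q : VV n × VV n} (h : [p, q] <:+: Shalf n) :
    ∃ i : ℕ, ∃ hi : i + 1 < (LL n).length,
      ((LL n).get ⟨i, Nat.lt_of_succ_lt hi⟩).1 = p.1 ∧ ((LL n).get ⟨i+1, hi⟩).1 = q.1 := by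
  rw [LL]
  obtain ⟨i, hi, h1, h2⟩ := infix_get (infix_append_right' ((Shalf n).map Prod.swap) h)
  exact ⟨i, hi, by rw [h1], by rw [h2]⟩

lemma cover_g {p q : VV n × VV n} (h : [p, q] <:+: Shalf n) :
    ∃ i : ℕ, ∃ hi : i + 1 < (LL n).length,
      ((LL n).get ⟨i, Nat.lt_of_succ_lt hi⟩).2 = p.1 ∧ ((LL n).get ⟨i+1, hi⟩).2 = q.1 := by
  rw [LL]
  have h' : [p.swap, q.swap] <:+: (Shalf n).map Prod.swap := by
    have := h.map Prod.swap
    simpa using this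
  obtain ⟨i, hi, h1, h2⟩ := infix_get (infix_append_left' (Shalf n) h')
  exact ⟨i, hi, by rw [h1]; rfl, by rw [h2]; rfl⟩

end Cover

section Classify
variable {n : ℕ} [NeZero n]

lemma edge_cases (hn : 4 ≤ n) {x y : VV n} (h : (KnPlus n).Adj x y) :
    (∃ k, 1 ≤ k ∧ k ≤ n-2 ∧ s(x,y) = s((va : VV n), mid k)) ∨
    (∃ k, 1 ≤ k ∧ k ≤ n-2 ∧ s(x,y) = s((vb : VV n), mid k)) ∨
    s(x,y) = s((va : VV n), vw) ∨ s(x,y) = s((vb : VV n), vw) ∨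
    (∃ i j, 1 ≤ i ∧ i ≤ n-2 ∧ 1 ≤ j ∧ j ≤ n-2 ∧ i ≠ j ∧
      s(x,y) = s((mid i : VV n), mid j)) := by
  rcases vertex_cases hn x with rfl | rfl | rfl | ⟨k, hk1, hk2, rfl⟩ <;>
    rcases vertex_cases hn y with rfl | rfl | rfl | ⟨j, hj1, hj2, rfl⟩
  · exact absurd rfl ((KnPlus n).ne_of_adj h)
  · exact absurd h (not_adj_va_vb hn)
  · exact Or.inr (Or.inr (Or.inl rfl))
  · exact Or.inl ⟨j, hj1, hj2, rfl⟩
  · exact absurd h.symm (not_adj_va_vb hn)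
  · exact absurd rfl ((KnPlus n).ne_of_adj h)
  · exact Or.inr (Or.inr (Or.inr (Or.inl rfl)))
  · exact Or.inr (Or.inl ⟨j, hj1, hj2, rfl⟩)
  · exact Or.inr (Or.inr (Or.inl (Sym2.eq_swap)))
  · exact Or.inr (Or.inr (Or.inr (Or.inl (Sym2.eq_swap))))
  · exact absurd rfl ((KnPlus n).ne_of_adj h)
  · exact absurd h (not_adj_vw_mid hn hj1 hj2)
  · exact Or.inl ⟨k, hk1, hk2, Sym2.eq_swap⟩
  · exact Or.inr (Or.inl ⟨k, hk1, hk2, Sym2.eq_swap⟩)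
  · exact absurd h.symm (not_adj_vw_mid hn hk1 hk2)
  · by_cases hkj : k = j
    · subst hkj; exact absurd rfl ((KnPlus n).ne_of_adj h)
    · exact Or.inr (Or.inr (Or.inr (Or.inr ⟨k, j, hk1, hk2, hj1, hj2, hkj, rfl⟩)))

lemma two_le_dist_facts {x y : VV n} (h : 2 ≤ (KnPlus n).dist x y) :
    x ≠ y ∧ ¬ (KnPlus n).Adj x y := by
  constructor
  · rintro rfl; rw [SimpleGraph.dist_self] at h; omega
  · intro hadj
    have := SimpleGraph.dist_le hadj.toWalk
    simp only [SimpleGraph.Adj.toWalk, SimpleGraph.Walk.length_cons,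
      SimpleGraph.Walk.length_nil] at this
    omega

lemma forced_vw (hn : 4 ≤ n) {k : ℕ} (h1 : 1 ≤ k) (h2 : k ≤ n-2) {x : VV n}
    (hne : x ≠ mid k) (hna : ¬ (KnPlus n).Adj (mid k) x) : x = vw := by
  rcases vertex_cases hn x with rfl | rfl | rfl | ⟨j, hj1, hj2, rfl⟩
  · exact absurd ((KnPlus n).adj_symm (adj_va_mid hn h1 h2)) hna
  · exact absurd ((KnPlus n).adj_symm (adj_vb_mid hn h1 h2)) hna
  · rfl
  · by_cases hjk : j = k
    · subst hjk; exact absurd rfl hne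
    · exact absurd (adj_mid_mid hn h1 h2 hj1 hj2 (fun hh => hjk hh.symm)) hna

lemma forced_vb (hn : 4 ≤ n) {x : VV n}
    (hne : x ≠ va) (hna : ¬ (KnPlus n).Adj va x) : x = vb := by
  rcases vertex_cases hn x with rfl | rfl | rfl | ⟨j, hj1, hj2, rfl⟩
  · exact absurd rfl hne
  · rfl
  · exact absurd (adj_va_vw hn) hna
  · exact absurd (adj_va_mid hn hj1 hj2) hna

lemma forced_mid (hn : 4 ≤ n) {x : VV n}
    (hne : x ≠ vw) (hna : ¬ (KnPlus n).Adj vw x) :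
    ∃ k, 1 ≤ k ∧ k ≤ n-2 ∧ x = mid k := by
  rcases vertex_cases hn x with rfl | rfl | rfl | ⟨j, hj1, hj2, rfl⟩
  · exact absurd ((KnPlus n).adj_symm (adj_va_vw hn)) hna
  · exact absurd ((KnPlus n).adj_symm (adj_vb_vw hn)) hna
  · exact absurd rfl hne
  · exact ⟨j, hj1, hj2, rfl⟩

end Classify

section Memberships
variable {n : ℕ} [NeZero n]

lemma mem_core_ab : ((va : VV n), vb) ∈ core n := by rw [core_eq]; simp
lemma mem_core_ba : ((vb : VV n), va) ∈ core n := by rw [core_eq]; simp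
lemma mem_core_w : ((vw : VV n), mid 1) ∈ core n := by rw [core_eq]; simp
lemma mem_core_mid (hn : 4 ≤ n) {k : ℕ} (h1 : 1 ≤ k) (h2 : k ≤ n-2) :
    ((mid k : VV n), vw) ∈ core n :=
  (infix_core_of_la (infix_la h1 h2)).subset (by simp)

lemma mem_LL_of_core {p : VV n × VV n} (hp : p ∈ core n) : p ∈ LL n := by
  rw [LL, Shalf]
  simp only [List.mem_append]
  exact Or.inl (Or.inl hp)

lemma mem_LL_of_core_swap {p : VV n × VV n} (hp : p ∈ core n) : p.swap ∈ LL n := by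
  rw [LL, Shalf]
  simp only [List.mem_append, List.mem_map]
  exact Or.inr ⟨p, Or.inl hp, rfl⟩

lemma dist_half (hn : 4 ≤ n) {p : VV n × VV n} (hp : p ∈ core n ∨ p = (vb, va)) :
    (KnPlus n).dist p.1 p.2 = 2 := by
  have : p = (va, vb) ∨ p = (vb, va) ∨ p = (vw, mid 1) ∨
      ∃ j, 1 ≤ j ∧ j ≤ n - 2 ∧ p = (mid j, vw) := by
    rcases hp with hp | rfl
    · exact mem_core hp
    · exact Or.inr (Or.inl rfl)
  rcases this with rfl | rfl | rfl | ⟨j, hj1, hj2, rfl⟩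
  · exact dist_va_vb hn
  · rw [SimpleGraph.dist_comm]; exact dist_va_vb hn
  · exact dist_vw_mid hn le_rfl (by omega)
  · rw [SimpleGraph.dist_comm]; exact dist_vw_mid hn hj1 hj2

lemma dist_elem (hn : 4 ≤ n) {p : VV n × VV n} (hp : p ∈ LL n) :
    (KnPlus n).dist p.1 p.2 = 2 := by
  rcases mem_LL hp with hp' | ⟨q, hq, rfl⟩
  · exact dist_half hn hp'
  · rw [SimpleGraph.dist_comm]
    exact dist_half hn hq

lemma LL_pos : 0 < (LL n).length := by
  rw [LL, Shalf]
  simp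

end Memberships

section Main
variable {n : ℕ} [NeZero n]

lemma witness_lazysweeps (hn : 4 ≤ n) :
    IsLazySweep (KnPlus n) (fun i : Fin (LL n).length => ((LL n).get i).1) ∧
    IsLazySweep (KnPlus n) (fun i : Fin (LL n).length => ((LL n).get i).2) := by
  have hchain := chain_LL hn
  have hsteps := List.isChain_iff_getElem.1 hchain
  constructor
  · constructor
    · constructor
      · -- surjectivity of f
        intro v
        have : ∃ p : VV n × VV n, p ∈ LL n ∧ p.1 = v := by
          rcases vertex_cases hn v with rfl | rfl | rfl | ⟨k, hk1, hk2, rfl⟩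
          · exact ⟨(va, vb), mem_LL_of_core mem_core_ab, rfl⟩
          · exact ⟨(vb, va), mem_LL_of_core mem_core_ba, rfl⟩
          · exact ⟨(vw, mid 1), mem_LL_of_core mem_core_w, rfl⟩
          · exact ⟨(mid k, vw), mem_LL_of_core (mem_core_mid hn hk1 hk2), rfl⟩
        obtain ⟨p, hp, hp1⟩ := this
        obtain ⟨i, hi⟩ := List.get_of_mem hp
        exact ⟨i, show ((LL n).get i).1 = v by rw [hi, hp1]⟩
      · intro i hi
        exact (hsteps i (by omega)).1
    · -- SweepCond for f
      intro e he
      induction e using Sym2.ind with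
      | _ x y =>
      have hadj : (KnPlus n).Adj x y := (SimpleGraph.mem_edgeSet _).1 he
      rcases edge_cases hn hadj with ⟨k, h1, h2, he'⟩ | ⟨k, h1, h2, he'⟩ | he' | he' |
          ⟨i, j, h1, h2, h3, h4, h5, he'⟩
      · obtain ⟨i, hi, hh1, hh2⟩ :=
          cover_f (infix_Shalf_of_core (infix_core_of_la (infix_la h1 h2)))
        exact ⟨i, hi, by simp only [he', hh1, hh2]⟩
      · obtain ⟨i, hi, hh1, hh2⟩ :=
          cover_f (infix_Shalf_of_core (infix_core_of_lc (infix_lc h1 h2)))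
        exact ⟨i, hi, by simp only [he', hh1, hh2]⟩
      · obtain ⟨i, hi, hh1, hh2⟩ := cover_f (infix_Shalf_of_core (infix_core_avw (n := n)))
        exact ⟨i, hi, by simp only [he', hh1, hh2]⟩
      · obtain ⟨i, hi, hh1, hh2⟩ := cover_f (infix_Shalf_of_core (infix_core_wb hn))
        exact ⟨i, hi, by simp only [he', hh1, hh2]; exact Sym2.eq_swap⟩
      · rcases Nat.lt_or_ge i j with hij | hij
        · obtain ⟨a, ha, hh1, hh2⟩ := cover_f (infix_Shalf_of_core (infix_core_of_dall
            ((infix_drow h1 (by omega)).trans (infix_dall (by omega) h4))))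
          exact ⟨a, ha, by simp only [he', hh1, hh2]⟩
        · obtain ⟨a, ha, hh1, hh2⟩ := cover_f (infix_Shalf_of_core (infix_core_of_dall
            ((infix_drow h3 (by omega)).trans (infix_dall (by omega) h2))))
          refine ⟨a, ha, by simp only [he', hh1, hh2]; exact Sym2.eq_swap⟩
  · constructor
    · constructor
      · -- surjectivity of g
        intro v
        have : ∃ p : VV n × VV n, p ∈ LL n ∧ p.2 = v := by
          rcases vertex_cases hn v with rfl | rfl | rfl | ⟨k, hk1, hk2, rfl⟩
          · exact ⟨(va, vb).swap, mem_LL_of_core_swap mem_core_ab, rfl⟩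
          · exact ⟨(vb, va).swap, mem_LL_of_core_swap mem_core_ba, rfl⟩
          · exact ⟨(vw, mid 1).swap, mem_LL_of_core_swap mem_core_w, rfl⟩
          · exact ⟨(mid k, vw).swap, mem_LL_of_core_swap (mem_core_mid hn hk1 hk2), rfl⟩
        obtain ⟨p, hp, hp1⟩ := this
        obtain ⟨i, hi⟩ := List.get_of_mem hp
        exact ⟨i, show ((LL n).get i).2 = v by rw [hi, hp1]⟩
      · intro i hi
        exact (hsteps i (by omega)).2
    · -- SweepCond for g
      intro e he
      induction e using Sym2.ind with
      | _ x y =>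
      have hadj : (KnPlus n).Adj x y := (SimpleGraph.mem_edgeSet _).1 he
      rcases edge_cases hn hadj with ⟨k, h1, h2, he'⟩ | ⟨k, h1, h2, he'⟩ | he' | he' |
          ⟨i, j, h1, h2, h3, h4, h5, he'⟩
      · obtain ⟨i, hi, hh1, hh2⟩ :=
          cover_g (infix_Shalf_of_core (infix_core_of_la (infix_la h1 h2)))
        exact ⟨i, hi, by simp only [he', hh1, hh2]⟩
      · obtain ⟨i, hi, hh1, hh2⟩ :=
          cover_g (infix_Shalf_of_core (infix_core_of_lc (infix_lc h1 h2)))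
        exact ⟨i, hi, by simp only [he', hh1, hh2]⟩
      · obtain ⟨i, hi, hh1, hh2⟩ := cover_g (infix_Shalf_of_core (infix_core_avw (n := n)))
        exact ⟨i, hi, by simp only [he', hh1, hh2]⟩
      · obtain ⟨i, hi, hh1, hh2⟩ := cover_g (infix_Shalf_of_core (infix_core_wb hn))
        exact ⟨i, hi, by simp only [he', hh1, hh2]; exact Sym2.eq_swap⟩
      · rcases Nat.lt_or_ge i j with hij | hij
        · obtain ⟨a, ha, hh1, hh2⟩ := cover_g (infix_Shalf_of_core (infix_core_of_dall
            ((infix_drow h1 (by omega)).trans (infix_dall (by omega) h4))))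
          exact ⟨a, ha, by simp only [he', hh1, hh2]⟩
        · obtain ⟨a, ha, hh1, hh2⟩ := cover_g (infix_Shalf_of_core (infix_core_of_dall
            ((infix_drow h3 (by omega)).trans (infix_dall (by omega) h2))))
          refine ⟨a, ha, by simp only [he', hh1, hh2]; exact Sym2.eq_swap⟩

lemma witness_mdist (hn : 4 ≤ n) :
    mDist (KnPlus n) (fun i : Fin (LL n).length => ((LL n).get i).1)
      (fun i : Fin (LL n).length => ((LL n).get i).2) = 2 := by
  have hset : {d | ∃ i : Fin (LL n).length,
      (KnPlus n).dist (((LL n).get i).1) (((LL n).get i).2) = d} = {2} := by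
    ext d
    simp only [Set.mem_setOf_eq, Set.mem_singleton_iff]
    constructor
    · rintro ⟨i, rfl⟩
      exact dist_elem hn (List.get_mem (LL n) i)
    · rintro rfl
      exact ⟨⟨0, LL_pos⟩, dist_elem hn (List.get_mem (LL n) ⟨0, LL_pos⟩)⟩
  show sInf {d | ∃ i : Fin (LL n).length,
      (KnPlus n).dist (((LL n).get i).1) (((LL n).get i).2) = d} = 2
  rw [hset]
  exact csInf_singleton 2

lemma strong_ge (hn : 4 ≤ n) : 2 ≤ strongEdgeSpan (KnPlus n) := by
  have hbdd : BddAbove {d | ∃ (l : ℕ) (f g : Fin l → VV n),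
      IsLazySweep (KnPlus n) f ∧ IsLazySweep (KnPlus n) g ∧ mDist (KnPlus n) f g = d} := by
    refine ⟨2, ?_⟩
    rintro d ⟨l, f, g, hf, hg, rfl⟩
    obtain ⟨i0, _⟩ := hf.1.1 vw
    exact le_trans (Nat.sInf_le ⟨i0, rfl⟩) (dist_le_two hn _ _)
  obtain ⟨hf, hg⟩ := witness_lazysweeps hn
  rw [strongEdgeSpan]
  exact le_csSup hbdd ⟨(LL n).length, _, _, hf, hg, witness_mdist hn⟩

lemma direct_le (hn : 4 ≤ n) : directEdgeSpan (KnPlus n) ≤ 1 := by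
  apply csSup_le'
  rintro d ⟨l, f, g, hf, hg, rfl⟩
  by_contra hlt
  push_neg at hlt
  have h2d : 2 ≤ mDist (KnPlus n) f g := hlt
  have hall : ∀ i : Fin l, 2 ≤ (KnPlus n).dist (f i) (g i) :=
    fun i => le_trans h2d (Nat.sInf_le ⟨i, rfl⟩)
  have hadj12 : (KnPlus n).Adj (mid 1) (mid 2) :=
    adj_mid_mid hn le_rfl (by omega) (by omega) (by omega) (by omega)
  obtain ⟨i, hi, he⟩ := hf.2 _ ((SimpleGraph.mem_edgeSet _).2 hadj12)
  rw [Sym2.eq_iff] at he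
  have hgadj : (KnPlus n).Adj (g ⟨i, Nat.lt_of_succ_lt hi⟩) (g ⟨i+1, hi⟩) := hg.1.2 i hi
  have hforce : ∀ (j : Fin l) (k : ℕ), 1 ≤ k → k ≤ n - 2 → f j = mid k → g j = vw := by
    intro j k hk1 hk2 hfj
    have h2 := hall j
    rw [hfj] at h2
    obtain ⟨hne, hna⟩ := two_le_dist_facts h2
    exact forced_vw hn hk1 hk2 (fun hh => hne hh.symm) hna
  rcases he with ⟨ha, hb⟩ | ⟨ha, hb⟩
  · rw [hforce _ 1 le_rfl (by omega) ha.symm, hforce _ 2 (by omega) (by omega) hb.symm] at hgadj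
    exact (KnPlus n).irrefl hgadj
  · rw [hforce _ 2 (by omega) (by omega) hb.symm, hforce _ 1 le_rfl (by omega) ha.symm] at hgadj
    exact (KnPlus n).irrefl hgadj

lemma cart_le (hn : 4 ≤ n) : cartesianEdgeSpan (KnPlus n) ≤ 1 := by
  apply csSup_le'
  rintro d ⟨l, f, g, hf, hg, hopp, rfl⟩
  by_contra hlt
  push_neg at hlt
  have h2d : 2 ≤ mDist (KnPlus n) f g := hlt
  have hall : ∀ i : Fin l, 2 ≤ (KnPlus n).dist (f i) (g i) :=
    fun i => le_trans h2d (Nat.sInf_le ⟨i, rfl⟩)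
  obtain ⟨i, hi, he⟩ := hf.2 _ ((SimpleGraph.mem_edgeSet _).2 (adj_va_vw hn))
  rw [Sym2.eq_iff] at he
  have hgeq : g ⟨i, Nat.lt_of_succ_lt hi⟩ = g ⟨i+1, hi⟩ := by
    apply (hopp i hi).1
    rcases he with ⟨ha, hb⟩ | ⟨ha, hb⟩
    · rw [← ha, ← hb]; exact adj_va_vw hn
    · rw [← ha, ← hb]; exact (KnPlus n).adj_symm (adj_va_vw hn)
  rcases he with ⟨ha, hb⟩ | ⟨ha, hb⟩
  · -- f i = va, f (i+1) = vw
    have h2a := hall ⟨i, Nat.lt_of_succ_lt hi⟩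
    rw [← ha] at h2a
    obtain ⟨hne, hna⟩ := two_le_dist_facts h2a
    have hgb : g ⟨i, Nat.lt_of_succ_lt hi⟩ = vb :=
      forced_vb hn (fun hh => hne hh.symm) hna
    have h2b := hall ⟨i+1, hi⟩
    rw [← hb] at h2b
    obtain ⟨hne2, hna2⟩ := two_le_dist_facts h2b
    obtain ⟨k, hk1, hk2, hgm⟩ := forced_mid hn (fun hh => hne2 hh.symm) hna2
    rw [hgb, hgm] at hgeq
    exact (ne_mid_vb hn hk2 (by omega)) hgeq.symm
  · -- f i = vw, f (i+1) = va
    have h2a := hall ⟨i, Nat.lt_of_succ_lt hi⟩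
    rw [← hb] at h2a
    obtain ⟨hne, hna⟩ := two_le_dist_facts h2a
    obtain ⟨k, hk1, hk2, hgm⟩ := forced_mid hn (fun hh => hne hh.symm) hna
    have h2b := hall ⟨i+1, hi⟩
    rw [← ha] at h2b
    obtain ⟨hne2, hna2⟩ := two_le_dist_facts h2b
    have hgb : g ⟨i+1, hi⟩ = vb := forced_vb hn (fun hh => hne2 hh.symm) hna2
    rw [hgm, hgb] at hgeq
    exact (ne_mid_vb hn hk2 (by omega)) hgeq

end Main

theorem stmt9 (n : ℕ) (hn : 4 ≤ n) :
    strongEdgeSpan (KnPlus n) > max (directEdgeSpan (KnPlus n)) (cartesianEdgeSpan (KnPlus n)) := by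
  haveI : NeZero n := ⟨by omega⟩
  have h1 := direct_le hn
  have h2 := cart_le hn
  have h3 := strong_ge hn
  have hmax : max (directEdgeSpan (KnPlus n)) (cartesianEdgeSpan (KnPlus n)) ≤ 1 := max_le h1 h2
  omega
end

section
/- For the cycle C_n on n ≥ 3 vertices, L⊠_E(C_n)=L×_E(C_n)=n+1. -/
open SimpleGraph

open Fin.CommRing Fin.NatCast

section Aux
variable {n : ℕ} [NeZero n]

lemma val_one_of (hn : 2 ≤ n) : (1 : Fin n).val = 1 := by
  rw [Fin.val_one']; exact Nat.mod_eq_of_lt (by omega)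

lemma adj_succ (hn : 3 ≤ n) (u : Fin n) : (cycleGraph n).Adj u (u + 1) := by
  rw [cycleGraph_adj']
  right
  rw [add_sub_cancel_left, val_one_of (by omega)]

lemma core_step (hn : 3 ≤ n) (a : Fin n) :
    min (a + 1).val (-(a + 1)).val ≤ min a.val (-a).val + 1 := by
  have hv1 : (1 : Fin n).val = 1 := val_one_of (by omega)
  have hx : a.val < n := a.isLt
  have hadd : (a + 1).val = (a.val + 1) % n := by rw [Fin.add_def, hv1]
  have hneg : ∀ b : Fin n, (-b).val = (n - b.val) % n := fun b => by
    rw [Fin.neg_def]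
  by_cases h1 : a.val = n - 1
  · have : (a + 1).val = 0 := by
      rw [hadd, h1, Nat.sub_add_cancel (by omega), Nat.mod_self]
    omega
  · have ha1 : (a + 1).val = a.val + 1 := by rw [hadd, Nat.mod_eq_of_lt (by omega)]
    have hn1 : (-(a + 1)).val = n - a.val - 1 := by
      rw [hneg, ha1, Nat.mod_eq_of_lt (by omega)]; omega
    by_cases h0 : a.val = 0
    · have : (-a).val = 0 := by rw [hneg, h0]; simp
      omega
    · have : (-a).val = n - a.val := by rw [hneg, Nat.mod_eq_of_lt (by omega)]
      omega

lemma cd_le_walk (hn : 3 ≤ n) : ∀ {u v : Fin n} (p : (cycleGraph n).Walk u v),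
    min (u - v).val (v - u).val ≤ p.length := by
  intro u v p
  induction p with
  | nil => simp
  | @cons u v w h p ih =>
    have key : min (u - w).val (w - u).val ≤ min (v - w).val (w - v).val + 1 := by
      rw [cycleGraph_adj'] at h
      have h1 : u - v = 1 ∨ v - u = 1 := by
        rcases h with h | h
        · left; exact Fin.ext (by rw [h, val_one_of (by omega)])
        · right; exact Fin.ext (by rw [h, val_one_of (by omega)])
      rcases h1 with h | h
      · have hx : u = v + 1 := by rw [← h]; ring
        subst hx
        have e1 : (v + 1 - w : Fin n) = (v - w) + 1 := by ring
        have e2 : (w - (v + 1) : Fin n) = -((v - w) + 1) := by ring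
        have e3 : (w - v : Fin n) = -(v - w) := by ring
        rw [e1, e2, e3]
        exact core_step hn (v - w)
      · have hx : u = v - 1 := by rw [← h]; ring
        subst hx
        have e1 : (v - 1 - w : Fin n) = -((w - v) + 1) := by ring
        have e2 : (w - (v - 1) : Fin n) = (w - v) + 1 := by ring
        have e3 : (v - w : Fin n) = -(w - v) := by ring
        rw [e1, e2, e3, min_comm ((-((w - v) + 1) : Fin n)).val, min_comm ((-(w - v) : Fin n)).val]
        exact core_step hn (w - v)
    rw [Walk.length_cons]
    omega

lemma cycle_connected (hn : 3 ≤ n) : (cycleGraph n).Connected := by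
  cases n with
  | zero => omega
  | succ m => exact cycleGraph_connected

lemma cd_le_dist (hn : 3 ≤ n) (u v : Fin n) :
    min (u - v).val (v - u).val ≤ (cycleGraph n).dist u v := by
  obtain ⟨p, hp⟩ := ((cycle_connected hn) u v).exists_walk_length_eq_dist
  rw [← hp]
  exact cd_le_walk hn p

lemma dist_le_cd (hn : 3 ≤ n) (u v : Fin n) :
    (cycleGraph n).dist u v ≤ min (u - v).val (v - u).val := by
  have key : ∀ (u : Fin n) (k : ℕ), (cycleGraph n).dist u (u + k) ≤ k := by
    intro u k
    induction k with
    | zero => simp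
    | succ k ih =>
      have : (u + (k + 1 : ℕ) : Fin n) = (u + k) + 1 := by push_cast; ring
      rw [this]
      calc (cycleGraph n).dist u ((u + k) + 1)
          ≤ (cycleGraph n).dist u (u + k) + (cycleGraph n).dist (u + k) ((u + k) + 1) :=
            (cycle_connected hn).dist_triangle
        _ ≤ k + 1 := by
            have := (dist_eq_one_iff_adj.mpr (adj_succ hn (u + k))).le
            omega
  have h1 : (cycleGraph n).dist u v ≤ (v - u).val := by
    have := key u (v - u).val
    rwa [Fin.cast_val_eq_self, add_sub_cancel] at this
  have h2 : (cycleGraph n).dist u v ≤ (u - v).val := by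
    rw [SimpleGraph.dist_comm]
    have := key v (u - v).val
    rwa [Fin.cast_val_eq_self, add_sub_cancel] at this
  omega

lemma dist_eq_cd (hn : 3 ≤ n) (u v : Fin n) :
    (cycleGraph n).dist u v = min (u - v).val (v - u).val :=
  le_antisymm (dist_le_cd hn u v) (cd_le_dist hn u v)

lemma val_eq_one (hn : 3 ≤ n) {a : Fin n} (h : a.val = 1) : a = 1 :=
  Fin.ext (by rw [h, val_one_of (by omega)])

lemma dist_le_half (hn : 3 ≤ n) (u v : Fin n) : (cycleGraph n).dist u v ≤ n / 2 := by
  rw [dist_eq_cd hn]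
  by_cases h : u = v
  · subst h; simp
  · have h1 : (u - v : Fin n) ≠ 0 := sub_ne_zero.mpr h
    have h2 : (v - u : Fin n) = -(u - v) := by ring
    have h3 : (u - v : Fin n).val ≠ 0 := fun h' => h1 (Fin.ext (by rw [h', Fin.val_zero]))
    have h4 : (u - v : Fin n).val < n := (u - v : Fin n).isLt
    have h5 : (v - u : Fin n).val = (n - (u - v : Fin n).val) % n := by
      rw [h2, Fin.neg_def]
    rw [h5, Nat.mod_eq_of_lt (by omega)]
    omega

/-- The rotating sweep. -/
def sweepF (n : ℕ) [NeZero n] (t : Fin n) : Fin (n + 1) → Fin n :=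
  fun i => (i.val : Fin n) + t

lemma sweepF_isSweep (hn : 3 ≤ n) (t : Fin n) : IsSweep (cycleGraph n) (sweepF n t) := by
  have hstep : ∀ i : ℕ, ∀ hi : i + 1 < n + 1,
      sweepF n t ⟨i + 1, hi⟩ = sweepF n t ⟨i, Nat.lt_of_succ_lt hi⟩ + 1 := by
    intro i hi
    show ((i + 1 : ℕ) : Fin n) + t = ((i : ℕ) : Fin n) + t + 1
    push_cast
    ring
  refine ⟨⟨?_, ?_⟩, ?_⟩
  · intro v
    refine ⟨⟨(v - t).val, by omega⟩, ?_⟩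
    show (((v - t).val : ℕ) : Fin n) + t = v
    rw [Fin.cast_val_eq_self, sub_add_cancel]
  · intro i hi
    rw [hstep i hi]
    exact adj_succ hn _
  · intro e he
    induction e with
    | h u v =>
      rw [mem_edgeSet, cycleGraph_adj'] at he
      have h1 : u = v + 1 ∨ v = u + 1 := by
        rcases he with h | h
        · left
          have : u - v = 1 := val_eq_one hn h
          rw [← this]; ring
        · right
          have : v - u = 1 := val_eq_one hn h
          rw [← this]; ring
      have key : ∀ w : Fin n, ∃ i : ℕ, ∃ hi : i + 1 < n + 1,
          sweepF n t ⟨i, Nat.lt_of_succ_lt hi⟩ = w ∧ sweepF n t ⟨i + 1, hi⟩ = w + 1 := by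
        intro w
        refine ⟨(w - t).val, by omega, ?_, ?_⟩
        · show (((w - t).val : ℕ) : Fin n) + t = w
          rw [Fin.cast_val_eq_self, sub_add_cancel]
        · show (((w - t).val + 1 : ℕ) : Fin n) + t = w + 1
          push_cast
          ring
      rcases h1 with h | h
      · obtain ⟨i, hi, e1, e2⟩ := key v
        exact ⟨i, hi, by rw [e1, e2, ← h, Sym2.eq_swap]⟩
      · obtain ⟨i, hi, e1, e2⟩ := key u
        exact ⟨i, hi, by rw [e1, e2, ← h]⟩

lemma isSweep_lazy {V : Type*} {G : SimpleGraph V} {l : ℕ} {f : Fin l → V}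
    (h : IsSweep G f) : IsLazySweep G f :=
  ⟨⟨h.1.1, fun i hi => Or.inl (h.1.2 i hi)⟩, h.2⟩

lemma mDist_sweepF (hn : 3 ≤ n) :
    mDist (cycleGraph n) (sweepF n 0) (sweepF n ((n / 2 : ℕ) : Fin n)) = n / 2 := by
  set c : Fin n := ((n / 2 : ℕ) : Fin n) with hc
  have hcval : c.val = n / 2 := Fin.val_cast_of_lt (by omega)
  have hdist : ∀ i : Fin (n + 1),
      (cycleGraph n).dist (sweepF n 0 i) (sweepF n c i) = n / 2 := by
    intro i
    rw [dist_eq_cd hn]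
    have e1 : (sweepF n 0 i - sweepF n c i : Fin n) = -c := by
      unfold sweepF; ring
    have e2 : (sweepF n c i - sweepF n 0 i : Fin n) = c := by
      unfold sweepF; ring
    have e3 : (-c : Fin n).val = n - n / 2 := by
      rw [Fin.neg_def]
      show (n - c.val) % n = n - n / 2
      rw [hcval]
      exact Nat.mod_eq_of_lt (by omega)
    rw [e1, e2, e3, hcval]
    omega
  unfold mDist
  have hset : {d | ∃ i : Fin (n + 1), (cycleGraph n).dist (sweepF n 0 i) (sweepF n c i) = d}
      = {n / 2} := by
    ext d
    simp only [Set.mem_setOf_eq, Set.mem_singleton_iff]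
    constructor
    · rintro ⟨i, rfl⟩; exact hdist i
    · rintro rfl; exact ⟨0, hdist 0⟩
  rw [hset, csInf_singleton]

lemma mDist_le_half (hn : 3 ≤ n) {l : ℕ} (f g : Fin l → Fin n)
    (hf : Function.Surjective f) : mDist (cycleGraph n) f g ≤ n / 2 := by
  obtain ⟨i0, -⟩ := hf 0
  unfold mDist
  refine le_trans (Nat.sInf_le ?_) (dist_le_half hn (f i0) (g i0))
  exact ⟨i0, rfl⟩

lemma sweep_length (hn : 3 ≤ n) {l : ℕ} {f : Fin l → Fin n}
    (hsc : SweepCond (cycleGraph n) f) : n + 1 ≤ l := by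
  have hex : ∀ x : Fin n, ∃ i : ℕ, ∃ hi : i + 1 < l,
      s(x, x + 1) = s(f ⟨i, Nat.lt_of_succ_lt hi⟩, f ⟨i + 1, hi⟩) :=
    fun x => hsc _ ((SimpleGraph.mem_edgeSet (cycleGraph n)).mpr (adj_succ hn x))
  choose ψ h1 h2 using hex
  have hl : 2 ≤ l := by have := h1 ⟨0, by omega⟩; omega
  have hinj : Function.Injective (fun x : Fin n => (⟨ψ x, by have := h1 x; omega⟩ : Fin (l - 1))) := by
    intro x y hxy
    have hψ : ψ x = ψ y := by simpa [Fin.ext_iff] using hxy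
    have hs : s(x, x + 1) = s(y, y + 1) := by
      rw [h2 x, h2 y]
      simp only [hψ]
    rw [Sym2.eq_iff] at hs
    rcases hs with ⟨h, -⟩ | ⟨ha, hb⟩
    · exact h
    · exfalso
      have hxx : x = x + 2 := by
        calc x = y + 1 := ha
          _ = (x + 1) + 1 := by rw [hb]
          _ = x + 2 := by ring
      have h20 : (0 : Fin n) = 2 :=
        add_left_cancel (show x + (0 : Fin n) = x + 2 by rw [add_zero, ← hxx])
      have hv2 : (2 : Fin n).val = 2 := by
        have hcast : ((2 : ℕ) : Fin n) = (2 : Fin n) := by norm_cast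
        rw [← hcast]
        exact Fin.val_cast_of_lt (by omega)
      rw [← h20] at hv2
      simp at hv2
  have hcard := Fintype.card_le_of_injective _ hinj
  rw [Fintype.card_fin, Fintype.card_fin] at hcard
  omega
end Aux

theorem stmt15 (n : ℕ) (hn : 3 ≤ n) :
    strongEdgeL (SimpleGraph.cycleGraph n) = n + 1 ∧
      directEdgeL (SimpleGraph.cycleGraph n) = n + 1 := by
  haveI : NeZero n := ⟨by omega⟩
  set c : Fin n := ((n / 2 : ℕ) : Fin n) with hc
  have hf := sweepF_isSweep hn (0 : Fin n)
  have hg := sweepF_isSweep hn c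
  have hm := mDist_sweepF hn
  -- spans
  have hspanD : directEdgeSpan (SimpleGraph.cycleGraph n) = n / 2 := by
    refine le_antisymm (csSup_le ⟨n / 2, n + 1, _, _, hf, hg, hm⟩ ?_) (le_csSup ⟨n / 2, ?_⟩ ⟨n + 1, _, _, hf, hg, hm⟩)
    · rintro d ⟨l, f, g, hf', hg', rfl⟩
      exact mDist_le_half hn f g hf'.1.1
    · rintro d ⟨l, f, g, hf', hg', rfl⟩
      exact mDist_le_half hn f g hf'.1.1
  have hspanS : strongEdgeSpan (SimpleGraph.cycleGraph n) = n / 2 := by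
    refine le_antisymm (csSup_le ⟨n / 2, n + 1, _, _, isSweep_lazy hf, isSweep_lazy hg, hm⟩ ?_)
      (le_csSup ⟨n / 2, ?_⟩ ⟨n + 1, _, _, isSweep_lazy hf, isSweep_lazy hg, hm⟩)
    · rintro d ⟨l, f, g, hf', hg', rfl⟩
      exact mDist_le_half hn f g hf'.1.1
    · rintro d ⟨l, f, g, hf', hg', rfl⟩
      exact mDist_le_half hn f g hf'.1.1
  constructor
  · have hmem : n + 1 ∈ {l | ∃ f g : Fin l → Fin n, IsLazySweep (SimpleGraph.cycleGraph n) f ∧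
        IsLazySweep (SimpleGraph.cycleGraph n) g ∧
        mDist (SimpleGraph.cycleGraph n) f g = strongEdgeSpan (SimpleGraph.cycleGraph n)} :=
      ⟨_, _, isSweep_lazy hf, isSweep_lazy hg, by rw [hm, hspanS]⟩
    refine le_antisymm (Nat.sInf_le hmem) (le_csInf ⟨_, hmem⟩ ?_)
    rintro l ⟨f, g, hf', -, -⟩
    exact sweep_length hn hf'.2
  · have hmem : n + 1 ∈ {l | ∃ f g : Fin l → Fin n, IsSweep (SimpleGraph.cycleGraph n) f ∧
        IsSweep (SimpleGraph.cycleGraph n) g ∧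
        mDist (SimpleGraph.cycleGraph n) f g = directEdgeSpan (SimpleGraph.cycleGraph n)} :=
      ⟨_, _, hf, hg, by rw [hm, hspanD]⟩
    refine le_antisymm (Nat.sInf_le hmem) (le_csInf ⟨_, hmem⟩ ?_)
    rintro l ⟨f, g, hf', -, -⟩
    exact sweep_length hn hf'.2
end
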